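/- Let K be a field of characteristic zero, q₁, q₂ ∈ K, and let α₁,…,α_n ∈ K be pairwise distinct. For each i set f_i(z) = ∏_{j≠i} (z − α_j), a one-variable polynomial. Then the iterated shuffle product f₁ * f₂ * ⋯ * f_n ∈ S_n is defined at the point (α₁,…,α_n) and its value there equals ((−1)^{n(n−1)/2} / n!) · ∏_{1≤i<j≤n} (α_i − q₁α_j)(α_i − q₂α_j). In particular, if α_i ≠ q₁α_j and α_i ≠ q₂α_j for all i < j, this value is nonzero. -/

import Mathlib

set_option maxHeartbeats 1000000
set_option synthInstance.maxHeartbeats 1000000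


open MvPolynomial

noncomputable section ShuffleAlgebra

variable (K : Type) [Field K]

/-- The field of rational functions in countably many variables `z 0, z 1, …` over `K`. -/
abbrev RF := FractionRing (MvPolynomial ℕ K)

/-- The variable `z i` as a rational function. -/
def Z (i : ℕ) : RF K := algebraMap (MvPolynomial ℕ K) (RF K) (X i)

/-- A constant, viewed as a rational function. -/
def cst (q : K) : RF K := algebraMap (MvPolynomial ℕ K) (RF K) (C q)

/-- Substitution `z i ↦ z (f i)` for an injective `f`, as a ring homomorphism of
rational functions. -/
def ren (f : ℕ → ℕ) (hf : Function.Injective f) : RF K →+* RF K :=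
  IsFractionRing.lift (g := (algebraMap (MvPolynomial ℕ K) (RF K)).comp (rename f).toRingHom)
    ((IsFractionRing.injective (MvPolynomial ℕ K) (RF K)).comp (rename_injective f hf))

/-- A permutation of `Fin k` extended (by the identity) to a permutation of `ℕ`. -/
def natPerm (k : ℕ) (σ : Equiv.Perm (Fin k)) : Equiv.Perm ℕ :=
  σ.extendDomain Fin.equivSubtype

/-- `Alt_{S_k}(F) = (1/k!) ∑_{σ ∈ S_k} sgn(σ) F(z_{σ(1)},…,z_{σ(k)})`. -/
def Alt (k : ℕ) (F : RF K) : RF K :=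
  (k.factorial : RF K)⁻¹ *
    ∑ σ : Equiv.Perm (Fin k),
      ((Equiv.Perm.sign σ : ℤ) : RF K) * ren K (natPerm k σ) (natPerm k σ).injective F

variable (q₁ q₂ : K)

/-- `μ(x,y) = (x − q₁y)(x − q₂y)/(x − y)²`. -/
def mu (x y : RF K) : RF K := (x - cst K q₁ * y) * (x - cst K q₂ * y) / (x - y) ^ 2

/-- The shuffle product of `F` (a function of `z 0, …, z (n-1)`) and `G`
(a function of `z 0, …, z (m-1)`). -/
def shuffle (n m : ℕ) (F G : RF K) : RF K :=
  Alt K (n + m) (F * ren K (· + n) (add_left_injective n) G *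
    ∏ i : Fin n, ∏ j : Fin m, mu K q₁ q₂ (Z K i.val) (Z K (n + j.val)))

/-- The Vandermonde determinant `Δ_n = ∏_{i<j} (z i − z j)`. -/
def vand (n : ℕ) : RF K :=
  algebraMap (MvPolynomial ℕ K) (RF K)
    (∏ j ∈ Finset.range n, ∏ i ∈ Finset.range j, (X i - X j))

/-- `f` is a symmetric Laurent polynomial in the variables `z 0, …, z (n-1)`. -/
def IsSymLaurent (n : ℕ) (f : RF K) : Prop :=
  (∃ (p : MvPolynomial ℕ K) (N : ℕ), (↑p.vars : Set ℕ) ⊆ Set.Iio n ∧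
      f * algebraMap (MvPolynomial ℕ K) (RF K) ((∏ i ∈ Finset.range n, X i) ^ N)
        = algebraMap (MvPolynomial ℕ K) (RF K) p) ∧
  ∀ σ : Equiv.Perm (Fin n), ren K (natPerm n σ) (natPerm n σ).injective f = f

/-- The `n`-th graded component `S_n` of the shuffle algebra: quotients `f/Δ_n` with
`f` a symmetric Laurent polynomial in `z 0, …, z (n-1)`. -/
def Sgr (n : ℕ) : Set (RF K) :=
  {F | ∃ f : RF K, IsSymLaurent K n f ∧ F = f / vand K n}

/-- Iterated (left-to-right) shuffle product of a list of elements of `S₁`. -/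
def iterSh (l : List (RF K)) : RF K :=
  (l.foldl (fun acc f => (shuffle K q₁ q₂ acc.2 1 acc.1 f, acc.2 + 1)) ((1 : RF K), 0)).1

/-- The iterated shuffle product `z^{i₁} * ⋯ * z^{i_n}`. -/
def zpows (l : List ℤ) : RF K := iterSh K q₁ q₂ (l.map fun i => Z K 0 ^ i)

/-- `F` is defined at the point `α` and its value there is `v`. -/
def EvalAt (α : ℕ → K) (F : RF K) (v : K) : Prop :=
  ∃ p q : MvPolynomial ℕ K, eval α q ≠ 0 ∧
    F * algebraMap (MvPolynomial ℕ K) (RF K) q = algebraMap (MvPolynomial ℕ K) (RF K) p ∧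
    eval α p = v * eval α q

end ShuffleAlgebra

-- ===== auxiliary lemmas =====
noncomputable section Aux

variable (K : Type) [Field K]

-- chunk
theorem ren_algebraMap (f : ℕ → ℕ) (hf : Function.Injective f) (p : MvPolynomial ℕ K) :
    ren K f hf (algebraMap (MvPolynomial ℕ K) (RF K) p)
      = algebraMap (MvPolynomial ℕ K) (RF K) (rename f p) :=
  IsLocalization.lift_eq _ _

theorem ren_comp (f g : ℕ → ℕ) (hf : Function.Injective f) (hg : Function.Injective g)
    (F : RF K) : ren K f hf (ren K g hg F) = ren K (f ∘ g) (hf.comp hg) F := by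
  have : (ren K f hf).comp (ren K g hg) = ren K (f ∘ g) (hf.comp hg) := by
    apply IsLocalization.ringHom_ext (nonZeroDivisors (MvPolynomial ℕ K))
    refine RingHom.ext fun p => ?_
    simp only [RingHom.comp_apply, ren_algebraMap, rename_rename]
  exact DFunLike.congr_fun this F

theorem ren_eq_id (f : ℕ → ℕ) (hf : Function.Injective f) (h : ∀ x, f x = x) (F : RF K) :
    ren K f hf F = F := by
  have hfe : f = id := funext h
  subst hfe
  have : ren K id hf = RingHom.id (RF K) := by
    apply IsLocalization.ringHom_ext (nonZeroDivisors (MvPolynomial ℕ K))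
    refine RingHom.ext fun p => ?_
    simp only [RingHom.comp_apply, ren_algebraMap, rename_id, RingHom.id_apply, AlgHom.id_apply]
  rw [this]; rfl

theorem natPerm_apply_lt (k : ℕ) (σ : Equiv.Perm (Fin k)) (x : ℕ) (h : x < k) :
    natPerm k σ x = (σ ⟨x, h⟩ : Fin k) := by
  have := Equiv.Perm.extendDomain_apply_subtype σ (Fin.equivSubtype (n := k)) (b := x) h
  simpa [natPerm, Fin.equivSubtype] using this

theorem natPerm_apply_ge (k : ℕ) (σ : Equiv.Perm (Fin k)) (x : ℕ) (h : ¬ x < k) :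
    natPerm k σ x = x :=
  Equiv.Perm.extendDomain_apply_not_subtype _ _ h

theorem natPerm_mul (k : ℕ) (σ τ : Equiv.Perm (Fin k)) :
    natPerm k σ * natPerm k τ = natPerm k (σ * τ) :=
  Equiv.Perm.extendDomain_mul _ _ _

theorem ren_Z (f : ℕ → ℕ) (hf : Function.Injective f) (i : ℕ) :
    ren K f hf (Z K i) = Z K (f i) := by
  rw [Z, ren_algebraMap, rename_X]; rfl

theorem ren_cst (f : ℕ → ℕ) (hf : Function.Injective f) (q : K) :
    ren K f hf (cst K q) = cst K q := by
  rw [cst, ren_algebraMap, rename_C]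

theorem ren_congr (f g : ℕ → ℕ) (hf : Function.Injective f) (hg : Function.Injective g)
    (h : f = g) (F : RF K) : ren K f hf F = ren K g hg F := by subst h; rfl

def finLtEquiv (n m : ℕ) : Fin n ≃ {x : Fin (n + m) // (x : ℕ) < n} where
  toFun i := ⟨⟨i, Nat.lt_of_lt_of_le i.2 (Nat.le_add_right n m)⟩, i.2⟩
  invFun x := ⟨x.1, x.2⟩
  left_inv i := rfl
  right_inv x := rfl

def embPerm (n m : ℕ) (σ : Equiv.Perm (Fin n)) : Equiv.Perm (Fin (n + m)) :=
  σ.extendDomain (finLtEquiv n m)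

theorem sign_embPerm (n m : ℕ) (σ : Equiv.Perm (Fin n)) :
    Equiv.Perm.sign (embPerm n m σ) = Equiv.Perm.sign σ :=
  Equiv.Perm.sign_extendDomain σ (finLtEquiv n m)

theorem natPerm_embPerm (n m : ℕ) (σ : Equiv.Perm (Fin n)) :
    natPerm (n + m) (embPerm n m σ) = natPerm n σ := by
  ext x
  by_cases h : x < n
  · have hx2 : x < n + m := Nat.lt_of_lt_of_le h (Nat.le_add_right n m)
    rw [natPerm_apply_lt _ _ x hx2, natPerm_apply_lt _ _ x h]
    have h' : ((⟨x, hx2⟩ : Fin (n + m)) : ℕ) < n := h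
    have := Equiv.Perm.extendDomain_apply_subtype σ (finLtEquiv n m)
      (b := (⟨x, hx2⟩ : Fin (n + m))) h'
    rw [embPerm, this]
    rfl
  · by_cases h2 : x < n + m
    · rw [natPerm_apply_lt _ _ x h2, natPerm_apply_ge _ _ x h]
      have h' : ¬ ((⟨x, h2⟩ : Fin (n + m)) : ℕ) < n := h
      have := Equiv.Perm.extendDomain_apply_not_subtype σ (finLtEquiv n m)
        (b := (⟨x, h2⟩ : Fin (n + m))) h'
      rw [embPerm, this]
    · rw [natPerm_apply_ge _ _ x h2, natPerm_apply_ge _ _ x h]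

theorem Alt_ren (k : ℕ) (τ : Equiv.Perm (Fin k)) (F : RF K) :
    Alt K k (ren K (natPerm k τ) (natPerm k τ).injective F)
      = ((Equiv.Perm.sign τ : ℤ) : RF K) * Alt K k F := by
  unfold Alt
  rw [mul_left_comm]
  congr 1
  rw [Finset.mul_sum]
  refine Fintype.sum_equiv (Equiv.mulRight τ) _ _ fun σ => ?_
  have h1 : ren K (natPerm k σ) (natPerm k σ).injective
      (ren K (natPerm k τ) (natPerm k τ).injective F)
      = ren K (natPerm k (σ * τ)) (natPerm k (σ * τ)).injective F := by
    rw [ren_comp]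
    exact ren_congr K _ _ _ _ (by rw [← natPerm_mul]; rfl) F
  rw [h1]
  have hs : ((Equiv.Perm.sign τ : ℤ) : RF K) * ((Equiv.Perm.sign (σ * τ) : ℤ) : RF K)
      = ((Equiv.Perm.sign σ : ℤ) : RF K) := by
    rw [← Int.cast_mul, ← Units.val_mul, map_mul]
    have : Equiv.Perm.sign τ * (Equiv.Perm.sign σ * Equiv.Perm.sign τ)
        = Equiv.Perm.sign σ := by
      rw [mul_comm (Equiv.Perm.sign σ) _, ← mul_assoc, Int.units_mul_self, one_mul]
    rw [this]
  simp only [Equiv.coe_mulRight]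
  rw [← mul_assoc, hs]

instance instCharZeroRF [CharZero K] : CharZero (RF K) :=
  charZero_of_injective_algebraMap (IsFractionRing.injective (MvPolynomial ℕ K) (RF K))

theorem Alt_mul_left (k : ℕ) (r H : RF K)
    (hr : ∀ σ : Equiv.Perm (Fin k), ren K (natPerm k σ) (natPerm k σ).injective r = r) :
    Alt K k (r * H) = r * Alt K k H := by
  unfold Alt
  have h : (∑ σ : Equiv.Perm (Fin k),
        ((Equiv.Perm.sign σ : ℤ) : RF K) * ren K (natPerm k σ) (natPerm k σ).injective (r * H))
      = r * ∑ σ : Equiv.Perm (Fin k),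
        ((Equiv.Perm.sign σ : ℤ) : RF K) * ren K (natPerm k σ) (natPerm k σ).injective H := by
    rw [Finset.mul_sum]
    refine Finset.sum_congr rfl fun σ _ => ?_
    rw [map_mul, hr σ]; ring
  rw [h]; ring

theorem Alt_cast_inv_mul (k c : ℕ) (H : RF K) :
    Alt K k (((c : RF K))⁻¹ * H) = (c : RF K)⁻¹ * Alt K k H := by
  refine Alt_mul_left K k _ H fun σ => ?_
  rw [map_inv₀, map_natCast]

theorem Alt_sgn_mul (k : ℕ) (u : ℤˣ) (H : RF K) :
    Alt K k (((u : ℤ) : RF K) * H) = ((u : ℤ) : RF K) * Alt K k H := by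
  refine Alt_mul_left K k _ H fun σ => ?_
  rw [map_intCast]

theorem Alt_sum {ι : Type} (k : ℕ) (s : Finset ι) (f : ι → RF K) :
    Alt K k (∑ i ∈ s, f i) = ∑ i ∈ s, Alt K k (f i) := by
  unfold Alt
  have h : ∀ σ : Equiv.Perm (Fin k),
      ren K (natPerm k σ) (natPerm k σ).injective (∑ i ∈ s, f i)
        = ∑ i ∈ s, ren K (natPerm k σ) (natPerm k σ).injective (f i) := fun σ =>
    map_sum (ren K (natPerm k σ) (natPerm k σ).injective) f s
  simp only [h, Finset.mul_sum]
  exact Finset.sum_comm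

theorem Alt_Alt_mul [CharZero K] (n m : ℕ) (F G : RF K)
    (hG : ∀ σ : Equiv.Perm (Fin n), ren K (natPerm n σ) (natPerm n σ).injective G = G) :
    Alt K (n + m) (Alt K n F * G) = Alt K (n + m) (F * G) := by
  have hAlt : ∀ σ : Equiv.Perm (Fin n),
      Alt K (n + m) (ren K (natPerm n σ) (natPerm n σ).injective (F * G))
        = ((Equiv.Perm.sign σ : ℤ) : RF K) * Alt K (n + m) (F * G) := by
    intro σ
    have h1 : ren K (natPerm n σ) (natPerm n σ).injective (F * G)
        = ren K (natPerm (n + m) (embPerm n m σ)) (natPerm (n + m) (embPerm n m σ)).injective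
            (F * G) :=
      ren_congr K _ _ _ _ (by rw [natPerm_embPerm]) (F * G)
    rw [h1, Alt_ren, sign_embPerm]
  have key : Alt K n F * G = (↑n.factorial)⁻¹ * ∑ σ : Equiv.Perm (Fin n),
      ((Equiv.Perm.sign σ : ℤ) : RF K) * ren K (natPerm n σ) (natPerm n σ).injective (F * G) := by
    rw [Alt, mul_assoc, Finset.sum_mul]
    congr 1
    refine Finset.sum_congr rfl fun σ _ => ?_
    rw [map_mul, hG σ, mul_assoc]
  rw [key, Alt_cast_inv_mul, Alt_sum]
  have hterm : ∀ σ : Equiv.Perm (Fin n),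
      Alt K (n + m) (((Equiv.Perm.sign σ : ℤ) : RF K)
          * ren K (natPerm n σ) (natPerm n σ).injective (F * G))
        = Alt K (n + m) (F * G) := by
    intro σ
    rw [Alt_sgn_mul, hAlt σ, ← mul_assoc, ← Int.cast_mul, ← Units.val_mul,
      Int.units_mul_self, Units.val_one, Int.cast_one, one_mul]
  rw [Finset.sum_congr rfl fun σ _ => hterm σ, Finset.sum_const, Finset.card_univ,
    Fintype.card_perm, Fintype.card_fin, nsmul_eq_mul, ← mul_assoc,
    inv_mul_cancel₀ (Nat.cast_ne_zero.mpr (Nat.factorial_ne_zero n)), one_mul]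

variable {K} in
theorem EvalAt_algebraMap (α : ℕ → K) (p : MvPolynomial ℕ K) :
    EvalAt K α (algebraMap (MvPolynomial ℕ K) (RF K) p) (eval α p) :=
  ⟨p, 1, by simp, by simp, by simp⟩

variable {K} in
theorem EvalAt_Z (α : ℕ → K) (i : ℕ) : EvalAt K α (Z K i) (α i) := by
  have := EvalAt_algebraMap α (X i : MvPolynomial ℕ K)
  simpa [Z] using this

variable {K} in
theorem EvalAt_cst (α : ℕ → K) (c : K) : EvalAt K α (cst K c) c := by
  have := EvalAt_algebraMap α (C c : MvPolynomial ℕ K)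
  simpa [cst] using this

variable {K} in
theorem EvalAt_one (α : ℕ → K) : EvalAt K α 1 1 := by
  simpa using EvalAt_algebraMap α 1

variable {K} in
theorem EvalAt_natCast (α : ℕ → K) (c : ℕ) : EvalAt K α (c : RF K) (c : K) := by
  have := EvalAt_algebraMap α (c : MvPolynomial ℕ K)
  simpa using this

variable {K} in
theorem EvalAt_mul {α : ℕ → K} {F G : RF K} {v w : K}
    (hF : EvalAt K α F v) (hG : EvalAt K α G w) : EvalAt K α (F * G) (v * w) := by
  obtain ⟨p₁, q₁, h₁, e₁, v₁⟩ := hF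
  obtain ⟨p₂, q₂, h₂, e₂, v₂⟩ := hG
  refine ⟨p₁ * p₂, q₁ * q₂, by simp [h₁, h₂], ?_, ?_⟩
  · rw [map_mul, map_mul]
    calc F * G * (algebraMap (MvPolynomial ℕ K) (RF K) q₁
          * algebraMap (MvPolynomial ℕ K) (RF K) q₂)
        = (F * algebraMap (MvPolynomial ℕ K) (RF K) q₁)
          * (G * algebraMap (MvPolynomial ℕ K) (RF K) q₂) := by ring
      _ = _ := by rw [e₁, e₂]
  · simp only [map_mul, v₁, v₂]; ring

variable {K} in
theorem EvalAt_add {α : ℕ → K} {F G : RF K} {v w : K}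
    (hF : EvalAt K α F v) (hG : EvalAt K α G w) : EvalAt K α (F + G) (v + w) := by
  obtain ⟨p₁, q₁, h₁, e₁, v₁⟩ := hF
  obtain ⟨p₂, q₂, h₂, e₂, v₂⟩ := hG
  refine ⟨p₁ * q₂ + p₂ * q₁, q₁ * q₂, by simp [h₁, h₂], ?_, ?_⟩
  · rw [map_mul, map_add, map_mul, map_mul]
    calc (F + G) * (algebraMap (MvPolynomial ℕ K) (RF K) q₁
          * algebraMap (MvPolynomial ℕ K) (RF K) q₂)
        = (F * algebraMap (MvPolynomial ℕ K) (RF K) q₁)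
          * algebraMap (MvPolynomial ℕ K) (RF K) q₂
          + (G * algebraMap (MvPolynomial ℕ K) (RF K) q₂)
          * algebraMap (MvPolynomial ℕ K) (RF K) q₁ := by ring
      _ = _ := by rw [e₁, e₂]
  · simp only [map_mul, map_add, v₁, v₂]; ring

variable {K} in
theorem EvalAt_zero (α : ℕ → K) : EvalAt K α 0 0 := by
  simpa using EvalAt_algebraMap α 0

variable {K} in
theorem EvalAt_sub {α : ℕ → K} {F G : RF K} {v w : K}
    (hF : EvalAt K α F v) (hG : EvalAt K α G w) : EvalAt K α (F - G) (v - w) := by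
  obtain ⟨p₂, q₂, h₂, e₂, v₂⟩ := hG
  have hneg : EvalAt K α (-G) (-w) :=
    ⟨-p₂, q₂, h₂, by rw [neg_mul, e₂, map_neg], by rw [map_neg, v₂]; ring⟩
  have := EvalAt_add hF hneg
  simpa [sub_eq_add_neg] using this

variable {K} in
theorem EvalAt_sum {ι : Type} {α : ℕ → K} (s : Finset ι) (F : ι → RF K) (v : ι → K)
    (h : ∀ i ∈ s, EvalAt K α (F i) (v i)) :
    EvalAt K α (∑ i ∈ s, F i) (∑ i ∈ s, v i) := by
  classical
  induction s using Finset.induction with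
  | empty => simpa using EvalAt_zero α
  | insert _ _ hx ih =>
    rename_i a s'
    rw [Finset.sum_insert hx, Finset.sum_insert hx]
    exact EvalAt_add (h a (Finset.mem_insert_self a s'))
      (ih fun i hi => h i (Finset.mem_insert_of_mem hi))

variable {K} in
theorem EvalAt_prod {ι : Type} {α : ℕ → K} (s : Finset ι) (F : ι → RF K) (v : ι → K)
    (h : ∀ i ∈ s, EvalAt K α (F i) (v i)) :
    EvalAt K α (∏ i ∈ s, F i) (∏ i ∈ s, v i) := by
  classical
  induction s using Finset.induction with
  | empty => simpa using EvalAt_one α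
  | insert _ _ hx ih =>
    rename_i a s'
    rw [Finset.prod_insert hx, Finset.prod_insert hx]
    exact EvalAt_mul (h a (Finset.mem_insert_self a s'))
      (ih fun i hi => h i (Finset.mem_insert_of_mem hi))

variable {K} in
theorem EvalAt_div {α : ℕ → K} {F G : RF K} {v w : K}
    (hF : EvalAt K α F v) (hG : EvalAt K α G w) (hw : w ≠ 0) :
    EvalAt K α (F / G) (v / w) := by
  obtain ⟨p₁, q₁, h₁, e₁, v₁⟩ := hF
  obtain ⟨p₂, q₂, h₂, e₂, v₂⟩ := hG
  have hp₂ : eval α p₂ ≠ 0 := by rw [v₂]; exact mul_ne_zero hw h₂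
  have hp₂' : (p₂ : MvPolynomial ℕ K) ≠ 0 := fun h => by simp [h] at hp₂
  have hap₂ : algebraMap (MvPolynomial ℕ K) (RF K) p₂ ≠ 0 := by
    rw [Ne, IsFractionRing.to_map_eq_zero_iff]; exact hp₂'
  have hG0 : G ≠ 0 := by
    intro h
    rw [h, zero_mul] at e₂
    exact hap₂ e₂.symm
  have haq₂ : algebraMap (MvPolynomial ℕ K) (RF K) q₂ ≠ 0 := by
    rw [Ne, IsFractionRing.to_map_eq_zero_iff]
    exact fun h => by simp [h] at h₂
  refine ⟨p₁ * q₂, q₁ * p₂, by rw [map_mul]; exact mul_ne_zero h₁ hp₂, ?_, ?_⟩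
  · rw [map_mul, map_mul]
    have key : algebraMap (MvPolynomial ℕ K) (RF K) p₂ / G
        = algebraMap (MvPolynomial ℕ K) (RF K) q₂ := by
      rw [← e₂]; field_simp
    calc F / G * (algebraMap (MvPolynomial ℕ K) (RF K) q₁
          * algebraMap (MvPolynomial ℕ K) (RF K) p₂)
        = (F * algebraMap (MvPolynomial ℕ K) (RF K) q₁)
          * (algebraMap (MvPolynomial ℕ K) (RF K) p₂ / G) := by
          field_simp
      _ = _ := by rw [e₁, key]
  · simp only [map_mul, v₁, v₂]
    field_simp

variable {K} in
theorem EvalAt_ren {α : ℕ → K} {F : RF K} {v : K} (f : ℕ → ℕ) (hf : Function.Injective f)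
    (h : EvalAt K (α ∘ f) F v) : EvalAt K α (ren K f hf F) v := by
  obtain ⟨p, q, hq, e, hv⟩ := h
  refine ⟨rename f p, rename f q, ?_, ?_, ?_⟩
  · rwa [eval_rename]
  · rw [← ren_algebraMap K f hf, ← ren_algebraMap K f hf, ← map_mul, e]
  · rw [eval_rename, eval_rename, hv]

variable (q₁ q₂ : K)

/-- The big product `P n g`. -/
def bigP (n : ℕ) (g : Fin n → RF K) : RF K :=
  (∏ i : Fin n, ren K (· + (i : ℕ)) (add_left_injective _) (g i)) *
    ∏ j ∈ Finset.range n, ∏ i ∈ Finset.range j, mu K q₁ q₂ (Z K i) (Z K j)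

theorem foldl_snd (l : List (RF K)) : ∀ (F : RF K) (c : ℕ),
    (l.foldl (fun acc f => (shuffle K q₁ q₂ acc.2 1 acc.1 f, acc.2 + 1)) (F, c)).2
      = c + l.length := by
  induction l with
  | nil => intro F c; simp
  | cons x l ih =>
    intro F c
    simp only [List.foldl_cons, List.length_cons]
    rw [ih]
    omega

theorem iterSh_append (l : List (RF K)) (x : RF K) :
    iterSh K q₁ q₂ (l ++ [x]) = shuffle K q₁ q₂ l.length 1 (iterSh K q₁ q₂ l) x := by
  rw [iterSh, List.foldl_append]
  simp only [List.foldl_cons, List.foldl_nil]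
  rw [iterSh]
  congr 1
  exact (foldl_snd K q₁ q₂ l 1 0).trans (Nat.zero_add _)

theorem Alt_zero_one : Alt K 0 (1 : RF K) = 1 := by
  rw [Alt]
  rw [Finset.sum_eq_single_of_mem (1 : Equiv.Perm (Fin 0)) (Finset.mem_univ _)
    (fun b _ hb => absurd (Subsingleton.elim b 1) hb)]
  simp

theorem ren_mu (f : ℕ → ℕ) (hf : Function.Injective f) (a b : ℕ) :
    ren K f hf (mu K q₁ q₂ (Z K a) (Z K b)) = mu K q₁ q₂ (Z K (f a)) (Z K (f b)) := by
  rw [mu, mu, map_div₀, map_mul, map_sub, map_sub, map_mul, map_mul, map_pow, map_sub,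
    ren_Z, ren_Z, ren_cst, ren_cst]

theorem ren_invM (n : ℕ) (σ : Equiv.Perm (Fin n)) :
    ren K (natPerm n σ) (natPerm n σ).injective
      (∏ i : Fin n, ∏ j : Fin 1, mu K q₁ q₂ (Z K i.val) (Z K (n + j.val)))
      = ∏ i : Fin n, ∏ j : Fin 1, mu K q₁ q₂ (Z K i.val) (Z K (n + j.val)) := by
  rw [map_prod]
  have h1 : ∀ i : Fin n,
      ren K (natPerm n σ) (natPerm n σ).injective
          (∏ j : Fin 1, mu K q₁ q₂ (Z K i.val) (Z K (n + j.val)))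
        = ∏ j : Fin 1, mu K q₁ q₂ (Z K (σ i).val) (Z K (n + j.val)) := by
    intro i
    rw [map_prod]
    refine Finset.prod_congr rfl fun j _ => ?_
    rw [ren_mu]
    congr 2
    · rw [natPerm_apply_lt n σ i.val i.2, Fin.eta]
    · exact natPerm_apply_ge n σ _ (by omega)
  rw [Finset.prod_congr rfl fun i _ => h1 i]
  exact Equiv.prod_comp σ fun i : Fin n =>
    ∏ j : Fin 1, mu K q₁ q₂ (Z K i.val) (Z K (n + j.val))

theorem ren_inv_shift (n : ℕ) (σ : Equiv.Perm (Fin n)) (x : RF K) :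
    ren K (natPerm n σ) (natPerm n σ).injective
        (ren K (· + n) (add_left_injective n) x)
      = ren K (· + n) (add_left_injective n) x := by
  rw [ren_comp]
  refine ren_congr K _ _ _ _ (funext fun y => ?_) x
  exact natPerm_apply_ge n σ (y + n) (by omega)

theorem iterSh_eq_Alt_bigP [CharZero K] (n : ℕ) (g : Fin n → RF K) :
    iterSh K q₁ q₂ (List.ofFn g) = Alt K n (bigP K q₁ q₂ n g) := by
  induction n with
  | zero =>
    have h1 : iterSh K q₁ q₂ (List.ofFn g) = 1 := by rw [List.ofFn_zero]; rfl
    have h2 : bigP K q₁ q₂ 0 g = 1 := by simp [bigP]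
    rw [h1, h2, Alt_zero_one]
  | succ n ih =>
    rw [List.ofFn_succ', List.concat_eq_append, iterSh_append, List.length_ofFn,
      ih (fun i => g i.castSucc), shuffle, mul_assoc,
      Alt_Alt_mul K n 1 _ _ (fun σ => by
        rw [map_mul, ren_inv_shift, ren_invM])]
    congr 1
    rw [bigP, bigP, Fin.prod_univ_castSucc, Finset.prod_range_succ]
    have hM : (∏ i : Fin n, ∏ j : Fin 1, mu K q₁ q₂ (Z K i.val) (Z K (n + j.val)))
        = ∏ i ∈ Finset.range n, mu K q₁ q₂ (Z K i) (Z K n) := by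
      rw [← Fin.prod_univ_eq_prod_range]
      refine Finset.prod_congr rfl fun i _ => ?_
      rw [Fin.prod_univ_one]; norm_num
    rw [hM]
    push_cast [Fin.coe_castSucc, Fin.val_last]
    ring

variable {K} in
theorem EvalAt_congr {α : ℕ → K} {F : RF K} {v w : K} (h : EvalAt K α F v) (hvw : v = w) :
    EvalAt K α F w := hvw ▸ h

variable {K} in
theorem EvalAt_intCast (α : ℕ → K) (m : ℤ) : EvalAt K α ((m : RF K)) ((m : K)) := by
  have := EvalAt_algebraMap α (m : MvPolynomial ℕ K)
  simpa using this

variable {K} in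
theorem EvalAt_inv {α : ℕ → K} {F : RF K} {v : K} (h : EvalAt K α F v) (hv : v ≠ 0) :
    EvalAt K α F⁻¹ v⁻¹ := by
  have := EvalAt_div (EvalAt_one α) h hv
  simpa [one_div] using this

variable {K} in
theorem EvalAt_mu_eval {q₁ q₂ : K} (β : ℕ → K) (a b : ℕ) (hab : β a ≠ β b) :
    EvalAt K β (mu K q₁ q₂ (Z K a) (Z K b))
      ((β a - q₁ * β b) * (β a - q₂ * β b) / (β a - β b) ^ 2) := by
  rw [mu]
  have hZ : ∀ c, EvalAt K β (Z K c) (β c) := EvalAt_Z β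
  have h1 := EvalAt_mul (EvalAt_sub (hZ a) (EvalAt_mul (EvalAt_cst β q₁) (hZ b)))
    (EvalAt_sub (hZ a) (EvalAt_mul (EvalAt_cst β q₂) (hZ b)))
  have h2 := EvalAt_mul (EvalAt_sub (hZ a) (hZ b)) (EvalAt_sub (hZ a) (hZ b))
  rw [← pow_two, ← pow_two] at h2
  exact EvalAt_div h1 h2 (pow_ne_zero 2 (sub_ne_zero.mpr hab))

variable {K} in
theorem EvalAt_bigP {q₁ q₂ : K} (n : ℕ) (α : Fin n → K) (β : ℕ → K)
    (hβ : ∀ i j : ℕ, i < j → j < n → β i ≠ β j) :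
    EvalAt K β (bigP K q₁ q₂ n (fun i => ∏ j ∈ Finset.univ.erase i, (Z K 0 - cst K (α j))))
      ((∏ i : Fin n, ∏ j ∈ Finset.univ.erase i, (β (0 + i.val) - α j)) *
        ∏ j ∈ Finset.range n, ∏ i ∈ Finset.range j,
          (β i - q₁ * β j) * (β i - q₂ * β j) / (β i - β j) ^ 2) := by
  rw [bigP]
  refine EvalAt_mul (EvalAt_prod _ _ _ fun i _ => ?_)
    (EvalAt_prod _ _ _ fun j hj => EvalAt_prod _ _ _ fun i hi => ?_)
  · exact EvalAt_ren _ _ (EvalAt_prod _ _ _ fun j _ =>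
      EvalAt_sub (EvalAt_Z _ 0) (EvalAt_cst _ (α j)))
  · exact EvalAt_mu_eval β i j
      (hβ i j (Finset.mem_range.mp hi) (Finset.mem_range.mp hj))

-- conversion of the inner `Iio` product to a `range` product
variable {K} in
theorem prod_Iio_val {n : ℕ} (j : Fin n) (w : ℕ → K) :
    ∏ i ∈ Finset.Iio j, w i.val = ∏ i ∈ Finset.range j.val, w i := by
  refine Finset.prod_bij (fun a _ => a.val) ?_ ?_ ?_ ?_
  · intro a ha
    simpa using Finset.mem_Iio.mp ha
  · intro a _ b _ h
    exact Fin.val_injective h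
  · intro b hb
    have hb' : b < j.val := Finset.mem_range.mp hb
    exact ⟨⟨b, hb'.trans j.2⟩, Finset.mem_Iio.mpr hb', rfl⟩
  · intro a _; rfl

variable {K} in
theorem prod_range_range {n : ℕ} (u : ℕ → ℕ → K) :
    ∏ j ∈ Finset.range n, ∏ i ∈ Finset.range j, u i j
      = ∏ j : Fin n, ∏ i ∈ Finset.Iio j, u i.val j.val := by
  rw [← Fin.prod_univ_eq_prod_range (fun j => ∏ i ∈ Finset.range j, u i j) n]
  exact Finset.prod_congr rfl fun j _ => (prod_Iio_val j fun i => u i j.val).symm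

variable {K} in
theorem erase_eq_Iio_union_Ioi {n : ℕ} (i : Fin n) :
    Finset.univ.erase i = Finset.Iio i ∪ Finset.Ioi i := by
  ext x
  simp only [Finset.mem_erase, Finset.mem_univ, and_true, Finset.mem_union,
    Finset.mem_Iio, Finset.mem_Ioi]
  exact ⟨fun h => h.lt_or_gt, fun h => h.elim (fun h => h.ne) fun h => h.ne'⟩

variable {K} in
theorem prod_erase_sub_eq {n : ℕ} (a : Fin n → K) :
    (∏ i : Fin n, ∏ j ∈ Finset.univ.erase i, (a i - a j))
      = (-1 : K) ^ (n * (n - 1) / 2) * ∏ j : Fin n, ∏ i ∈ Finset.Iio j, (a i - a j) ^ 2 := by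
  have h1 : (∏ i : Fin n, ∏ j ∈ Finset.univ.erase i, (a i - a j))
      = (∏ i : Fin n, ∏ j ∈ Finset.Iio i, (a i - a j))
        * ∏ i : Fin n, ∏ j ∈ Finset.Ioi i, (a i - a j) := by
    rw [← Finset.prod_mul_distrib]
    refine Finset.prod_congr rfl fun i _ => ?_
    rw [erase_eq_Iio_union_Ioi i, Finset.prod_union]
    exact Finset.disjoint_left.mpr fun x hx hx' =>
      absurd (Finset.mem_Iio.mp hx) (not_lt.mpr (le_of_lt (Finset.mem_Ioi.mp hx')))
  have h2 : (∏ i : Fin n, ∏ j ∈ Finset.Ioi i, (a i - a j))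
      = ∏ j : Fin n, ∏ i ∈ Finset.Iio j, (a i - a j) := by
    refine Finset.prod_comm' fun x y => ?_
    simp only [Finset.mem_univ, true_and, Finset.mem_Ioi, Finset.mem_Iio, and_true]
  rw [h1, h2, ← Finset.prod_mul_distrib]
  have h3 : ∀ j : Fin n, (∏ i ∈ Finset.Iio j, (a j - a i)) * ∏ i ∈ Finset.Iio j, (a i - a j)
      = (-1 : K) ^ (j : ℕ) * ∏ i ∈ Finset.Iio j, (a i - a j) ^ 2 := by
    intro j
    rw [← Finset.prod_mul_distrib]
    have : ∀ i ∈ Finset.Iio j, (a j - a i) * (a i - a j) = (-1) * (a i - a j) ^ 2 :=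
      fun i _ => by ring
    rw [Finset.prod_congr rfl this, Finset.prod_mul_distrib, Finset.prod_const,
      Fin.card_Iio j]
  rw [Finset.prod_congr rfl fun j _ => h3 j, Finset.prod_mul_distrib,
    Finset.prod_pow_eq_pow_sum, Fin.sum_univ_eq_sum_range (fun i => i) n,
    Finset.sum_range_id]


end Aux

set_option maxHeartbeats 1000000 in
set_option synthInstance.maxHeartbeats 1000000 in
/-- for pairwise distinct `α₁, …, α_n` and `f_i(z) = ∏_{j≠i} (z − α_j)`,
the iterated shuffle product `f₁ * ⋯ * f_n` is defined at `(α₁,…,α_n)` with value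
`((−1)^{n(n−1)/2}/n!) ∏_{i<j} (α_i − q₁α_j)(α_i − q₂α_j)`; in particular this value is
nonzero whenever `α_i ≠ q₁α_j` and `α_i ≠ q₂α_j` for all `i < j`. -/
theorem iterSh_value_at_point (K : Type) [Field K] [CharZero K] (q₁ q₂ : K)
    (n : ℕ) (α : Fin n → K) (hα : Function.Injective α) :
    EvalAt K (fun k => if h : k < n then α ⟨k, h⟩ else 0)
      (iterSh K q₁ q₂ (List.ofFn fun i : Fin n =>
        ∏ j ∈ Finset.univ.erase i, (Z K 0 - cst K (α j))))
      (((-1 : K) ^ (n * (n - 1) / 2) / (n.factorial : K)) *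
        ∏ j : Fin n, ∏ i ∈ Finset.Iio j, (α i - q₁ * α j) * (α i - q₂ * α j)) ∧
    ((∀ i j : Fin n, i < j → α i ≠ q₁ * α j ∧ α i ≠ q₂ * α j) →
      ((-1 : K) ^ (n * (n - 1) / 2) / (n.factorial : K)) *
        ∏ j : Fin n, ∏ i ∈ Finset.Iio j, (α i - q₁ * α j) * (α i - q₂ * α j) ≠ 0) := by
  set ᾱ : ℕ → K := fun k => if h : k < n then α ⟨k, h⟩ else 0 with hᾱdef
  have hᾱ : ∀ i : Fin n, ᾱ i.val = α i := fun i => by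
    simp only [hᾱdef, i.isLt, dif_pos, Fin.eta]
  constructor
  · rw [iterSh_eq_Alt_bigP, Alt]
    -- the point seen through the permutation σ
    set β : Equiv.Perm (Fin n) → ℕ → K := fun σ => ᾱ ∘ ⇑(natPerm n σ) with hβdef
    have hβlt : ∀ σ (i : ℕ) (h : i < n), β σ i = α (σ ⟨i, h⟩) := by
      intro σ i h
      show ᾱ (natPerm n σ i) = _
      rw [natPerm_apply_lt n σ i h, hᾱ]
    have hdist : ∀ σ (i j : ℕ), i < j → j < n → β σ i ≠ β σ j := by
      intro σ i j hij hj
      rw [hβlt σ i (hij.trans hj), hβlt σ j hj]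
      intro hc
      have := σ.injective (hα hc)
      simp only [Fin.mk.injEq] at this
      omega
    -- values of the individual summands
    set val : Equiv.Perm (Fin n) → K := fun σ =>
      (∏ i : Fin n, ∏ j ∈ Finset.univ.erase i, (β σ (0 + i.val) - α j)) *
        ∏ j ∈ Finset.range n, ∏ i ∈ Finset.range j,
          (β σ i - q₁ * β σ j) * (β σ i - q₂ * β σ j) / (β σ i - β σ j) ^ 2 with hvaldef
    have hterm : ∀ σ ∈ (Finset.univ : Finset (Equiv.Perm (Fin n))),
        EvalAt K ᾱ (((Equiv.Perm.sign σ : ℤ) : RF K) *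
          ren K (natPerm n σ) (natPerm n σ).injective
            (bigP K q₁ q₂ n fun i => ∏ j ∈ Finset.univ.erase i, (Z K 0 - cst K (α j))))
          (((Equiv.Perm.sign σ : ℤ) : K) * val σ) := by
      intro σ _
      exact EvalAt_mul (EvalAt_intCast ᾱ _)
        (EvalAt_ren _ _ (EvalAt_bigP n α (β σ) (hdist σ)))
    have hsum := EvalAt_sum Finset.univ _ _ hterm
    have hinv := EvalAt_inv (EvalAt_natCast ᾱ n.factorial)
      (Nat.cast_ne_zero.mpr (Nat.factorial_ne_zero n))
    refine EvalAt_congr (EvalAt_mul hinv hsum) ?_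
    -- now the pure value computation in K
    have hvanish : ∀ σ ∈ (Finset.univ : Finset (Equiv.Perm (Fin n))),
        σ ≠ 1 → ((Equiv.Perm.sign σ : ℤ) : K) * val σ = 0 := by
      intro σ _ hσ
      have hex : ∃ i : Fin n, σ i ≠ i := by
        by_contra hc
        push_neg at hc
        exact hσ (Equiv.ext hc)
      obtain ⟨i, hi⟩ := hex
      have hzero : (∏ j ∈ Finset.univ.erase i, (β σ (0 + i.val) - α j)) = 0 := by
        refine Finset.prod_eq_zero (Finset.mem_erase.mpr ⟨hi, Finset.mem_univ _⟩) ?_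
        rw [zero_add, hβlt σ i.val i.isLt, Fin.eta, sub_self]
      rw [hvaldef]
      simp only
      rw [Finset.prod_eq_zero (Finset.mem_univ i) hzero, zero_mul, mul_zero]
    rw [Finset.sum_eq_single_of_mem 1 (Finset.mem_univ 1) hvanish]
    have hβ1 : β 1 = ᾱ := by
      rw [hβdef]
      show ᾱ ∘ ⇑(natPerm n 1) = ᾱ
      rw [natPerm, Equiv.Perm.extendDomain_one]
      rfl
    have hval1 : val 1 = (∏ i : Fin n, ∏ j ∈ Finset.univ.erase i, (α i - α j)) *
        ∏ j : Fin n, ∏ i ∈ Finset.Iio j,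
          (α i - q₁ * α j) * (α i - q₂ * α j) / (α i - α j) ^ 2 := by
      rw [hvaldef]
      simp only [hβ1]
      congr 1
      · refine Finset.prod_congr rfl fun i _ => Finset.prod_congr rfl fun j _ => ?_
        rw [zero_add, hᾱ]
      · rw [prod_range_range]
        refine Finset.prod_congr rfl fun j _ => Finset.prod_congr rfl fun i _ => ?_
        rw [hᾱ, hᾱ]
    rw [hval1]
    simp only [Equiv.Perm.sign_one, Units.val_one, Int.cast_one, one_mul]
    -- final scalar identity
    rw [prod_erase_sub_eq]
    have hD : (∏ j : Fin n, ∏ i ∈ Finset.Iio j, (α i - α j) ^ 2) ≠ 0 := by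
      refine Finset.prod_ne_zero_iff.mpr fun j _ => Finset.prod_ne_zero_iff.mpr fun i hi => ?_
      exact pow_ne_zero 2 (sub_ne_zero.mpr (fun hc => absurd (hα hc)
        (ne_of_lt (Finset.mem_Iio.mp hi))))
    have hdiv : (∏ j : Fin n, ∏ i ∈ Finset.Iio j,
        (α i - q₁ * α j) * (α i - q₂ * α j) / (α i - α j) ^ 2)
        = (∏ j : Fin n, ∏ i ∈ Finset.Iio j, (α i - q₁ * α j) * (α i - q₂ * α j))
          / ∏ j : Fin n, ∏ i ∈ Finset.Iio j, (α i - α j) ^ 2 := by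
      rw [← Finset.prod_div_distrib]
      exact Finset.prod_congr rfl fun j _ => Finset.prod_div_distrib _ _
    rw [hdiv, mul_assoc,
      mul_comm (∏ j : Fin n, ∏ i ∈ Finset.Iio j, (α i - α j) ^ 2),
      div_mul_cancel₀ _ hD, div_eq_mul_inv]
    ring
  · intro h
    refine mul_ne_zero (div_ne_zero (pow_ne_zero _ (neg_ne_zero.mpr one_ne_zero))
      (Nat.cast_ne_zero.mpr (Nat.factorial_ne_zero n))) ?_
    refine Finset.prod_ne_zero_iff.mpr fun j _ => Finset.prod_ne_zero_iff.mpr fun i hi => ?_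
    have hij := Finset.mem_Iio.mp hi
    exact mul_ne_zero (sub_ne_zero.mpr (h i j hij).1) (sub_ne_zero.mpr (h i j hij).2)
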